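/- arXiv:2007.08966 — 2 statements merged into one kernel-verified Lean document; each statement's English description precedes it below -/
import Mathlib

section
/- Let g ≥ 1 and f(x) = x^{2g+1} + Σ_{k=0}^{2g−1} λ_{2(2g+1−k)} x^k. For 1 ≤ i < j ≤ g with j ≥ i+2, the polynomial r(2(g−j+1) x^{j−i−2} f(x) + x^{2g−i−j+1} ∂_x q(f(x), x^{2g−2j+2}), f'(x)) equals Σ_{k=0}^{2g−2j+2} (2g−2j+2−k) λ_{2(2g+1−k)} x^{k+j−i−2}, and in particular has degree ≤ 2g−3 in x. -/
open Polynomial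

noncomputable section

/-- The base field `ℚ(λ_4, …, λ_{4g+2})`; the variable `X j` stands for `λ_{2j}`. -/
abbrev KF := FractionRing (MvPolynomial ℕ ℚ)

/-- `λ_{2j}` in `KF`, with `λ_0 = 1`, `λ_2 = 0` and `λ_s = 0` outside `{0,4,…,4g+2}`. -/
def lamK (g j : ℕ) : KF :=
  if j = 0 then 1 else if 2 ≤ j ∧ j ≤ 2*g+1 then
    algebraMap (MvPolynomial ℕ ℚ) KF (MvPolynomial.X j) else 0

/-- `f(x) = x^{2g+1} + Σ_{k=0}^{2g−1} λ_{2(2g+1−k)} x^k`. -/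
def fHyp (g : ℕ) : Polynomial KF :=
  X ^ (2*g+1) + ∑ k ∈ Finset.range (2*g), C (lamK g (2*g+1-k)) * X ^ k

open Finset

private lemma sum_shift_mul (N t : ℕ) (c : ℕ → KF) :
    (X : Polynomial KF) ^ t * ∑ k ∈ range N, C (c k) * X ^ k
      = ∑ k ∈ range N, C (c k) * X ^ (t + k) := by
  rw [Finset.mul_sum]
  refine Finset.sum_congr rfl fun k _ => ?_
  rw [pow_add]; ring

private lemma quot_aux (m a : ℕ) (A : ℕ → KF) :
    (X ^ (m+a+2) + ∑ k ∈ range (m+(a+1)), C (A k) * X ^ k) /ₘ X ^ m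
      = X ^ (a+2) + ∑ k ∈ range (a+1), C (A (m+k)) * X ^ k := by
  refine (Polynomial.div_modByMonic_unique _ (∑ k ∈ range m, C (A k) * X ^ k)
    (monic_X_pow m) ⟨?_, ?_⟩).1
  · rw [mul_add, sum_shift_mul, Finset.sum_range_add (fun k => C (A k) * X ^ k) m (a+1)]
    ring
  · rw [degree_X_pow]
    refine lt_of_le_of_lt (degree_sum_le _ _) ?_
    refine Finset.sup_lt_iff (by exact_mod_cast WithBot.bot_lt_coe m) |>.mpr fun k hk => ?_
    exact lt_of_le_of_lt (degree_C_mul_X_pow_le _ _) (by exact_mod_cast mem_range.mp hk)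

private lemma deriv_aux (b : ℕ) (B : ℕ → KF) :
    derivative (X ^ (b+2) + ∑ k ∈ range (b+1), C (B k) * X ^ k)
      = C (((b+2 : ℕ) : KF)) * X ^ (b+1)
        + ∑ k ∈ range b, C (B (k+1) * ((k+1 : ℕ) : KF)) * X ^ k := by
  rw [derivative_add, derivative_X_pow, derivative_sum]
  rw [Finset.sum_congr rfl (fun k _ => derivative_C_mul_X_pow (B k) k),
    Finset.sum_range_succ']
  rw [show b+2-1 = b+1 by omega]
  simp only [Nat.add_sub_cancel, Nat.cast_zero, mul_zero, C_0, zero_mul, add_zero]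

private lemma deg_deriv (m a : ℕ) (A : ℕ → KF) :
    degree (derivative (X ^ (m+a+2) + ∑ k ∈ range (m+(a+1)), C (A k) * X ^ k))
      = ((m+a+1 : ℕ) : WithBot ℕ) := by
  rw [show m+(a+1) = m+a+1 by ring, deriv_aux (m+a) A]
  have hlt : degree (∑ k ∈ range (m+a), C (A (k+1) * ((k+1 : ℕ) : KF)) * X ^ k)
      < degree (C (((m+a+2 : ℕ)) : KF) * X ^ (m+a+1)) := by
    rw [degree_C_mul_X_pow _ (Nat.cast_ne_zero.mpr (by omega : m+a+2 ≠ 0))]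
    refine lt_of_le_of_lt (degree_sum_le _ _) ?_
    refine Finset.sup_lt_iff (by exact_mod_cast WithBot.bot_lt_coe (m+a+1)) |>.mpr fun k hk => ?_
    exact lt_of_le_of_lt (degree_C_mul_X_pow_le _ _)
      (by exact_mod_cast Nat.lt_succ_of_lt (mem_range.mp hk))
  rw [degree_add_eq_left_of_degree_lt hlt,
    degree_C_mul_X_pow _ (Nat.cast_ne_zero.mpr (by omega : m+a+2 ≠ 0))]

private lemma mod_eq_of {d q r p : Polynomial KF} (hd : d ≠ 0)
    (h : p = r + q * d) (hr : degree r < degree d) : p % d = r := by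
  rw [Polynomial.mod_def]
  have hlc : d.leadingCoeff ≠ 0 := leadingCoeff_ne_zero.mpr hd
  have hmul : d * C d.leadingCoeff⁻¹ * (q * C d.leadingCoeff) = q * d := by
    rw [mul_mul_mul_comm, ← C_mul, inv_mul_cancel₀ hlc, C_1, mul_one, mul_comm]
  refine (Polynomial.div_modByMonic_unique (q * C d.leadingCoeff) r
    (monic_mul_leadingCoeff_inv hd) ⟨?_, ?_⟩).2
  · rw [h, hmul]
  · rwa [degree_mul_leadingCoeff_inv d hd]

private lemma core (m a : ℕ) (A : ℕ → KF) :
    C ((m : ℕ) : KF) * (X ^ (m+a+2) + ∑ k ∈ range (m+(a+1)), C (A k) * X ^ k)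
      + X ^ (m+1) * derivative (X ^ (a+2) + ∑ k ∈ range (a+1), C (A (m+k)) * X ^ k)
    = (∑ k ∈ range (m+1), C (((m-k : ℕ) : KF) * A k) * X ^ k)
      + X * derivative (X ^ (m+a+2) + ∑ k ∈ range (m+(a+1)), C (A k) * X ^ k) := by
  rw [show m+(a+1) = m+a+1 by ring]
  rw [deriv_aux a (fun k => A (m+k)), deriv_aux (m+a) A]
  rw [mul_add (C ((m : ℕ) : KF)), mul_add (X ^ (m+1) : Polynomial KF),
    mul_add (X : Polynomial KF)]
  have hS : C ((m : ℕ) : KF) * ∑ k ∈ range (m+a+1), C (A k) * X ^ k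
      = (∑ k ∈ range (m+1), C (((m : ℕ) : KF) * A k) * X ^ k)
        + ∑ k ∈ range a, C (((m : ℕ) : KF) * A ((m+1)+k)) * X ^ ((m+1)+k) := by
    rw [show m+a+1 = (m+1)+a by ring,
      Finset.sum_range_add (fun k => C (A k) * X ^ k) (m+1) a, mul_add,
      Finset.mul_sum, Finset.mul_sum]
    refine congrArg₂ (· + ·) ?_ ?_
    · exact Finset.sum_congr rfl fun k _ => by rw [← mul_assoc, ← C_mul]
    · exact Finset.sum_congr rfl fun k _ => by rw [← mul_assoc, ← C_mul]
  rw [hS, sum_shift_mul]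
  have hT2 : (X : Polynomial KF) * ∑ k ∈ range (m+a), C (A (k+1) * ((k+1 : ℕ) : KF)) * X ^ k
      = (∑ k ∈ range m, C (A (k+1) * ((k+1 : ℕ) : KF)) * X ^ (k+1))
        + ∑ k ∈ range a, C (A ((m+1)+k) * ((((m+1)+k : ℕ)) : KF)) * X ^ ((m+1)+k) := by
    rw [Finset.mul_sum]
    rw [show (∑ k ∈ range (m+a), (X : Polynomial KF) * (C (A (k+1) * ((k+1 : ℕ) : KF)) * X ^ k))
        = ∑ k ∈ range (m+a), C (A (k+1) * ((k+1 : ℕ) : KF)) * X ^ (k+1) from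
      Finset.sum_congr rfl fun k _ => by rw [pow_succ]; ring]
    rw [Finset.sum_range_add (fun k => C (A (k+1) * ((k+1 : ℕ) : KF)) * X ^ (k+1)) m a]
    refine congrArg₂ (· + ·) rfl ?_
    refine Finset.sum_congr rfl fun k _ => ?_
    rw [show m+k+1 = (m+1)+k by ring]
  rw [hT2]
  have hTail : (∑ k ∈ range a, C (((m : ℕ) : KF) * A ((m+1)+k)) * X ^ ((m+1)+k))
      + (∑ k ∈ range a, C (A (m+(k+1)) * ((k+1 : ℕ) : KF)) * X ^ ((m+1)+k))
      = ∑ k ∈ range a, C (A ((m+1)+k) * ((((m+1)+k : ℕ)) : KF)) * X ^ ((m+1)+k) := by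
    rw [← Finset.sum_add_distrib]
    refine Finset.sum_congr rfl fun k _ => ?_
    rw [show m+(k+1) = (m+1)+k by ring, ← add_mul, ← C_add]
    congr 1
    push_cast
    ring
  have h0q : (∑ k ∈ range m, C (A (k+1) * ((k+1 : ℕ) : KF)) * X ^ (k+1))
      = ∑ k ∈ range (m+1), C (A k * ((k : ℕ) : KF)) * X ^ k := by
    rw [Finset.sum_range_succ']
    simp
  have hHead : (∑ k ∈ range (m+1), C (((m-k : ℕ) : KF) * A k) * X ^ k)
      + (∑ k ∈ range m, C (A (k+1) * ((k+1 : ℕ) : KF)) * X ^ (k+1))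
      = ∑ k ∈ range (m+1), C (((m : ℕ) : KF) * A k) * X ^ k := by
    rw [h0q, ← Finset.sum_add_distrib]
    refine Finset.sum_congr rfl fun k hk => ?_
    rw [← add_mul, ← C_add]
    congr 2
    rw [Nat.cast_sub (Nat.lt_succ_iff.mp (mem_range.mp hk))]
    ring
  have hTop : C ((m : ℕ) : KF) * X ^ (m+a+2)
      + X ^ (m+1) * (C (((a+2 : ℕ) : KF)) * X ^ (a+1))
      = X * (C (((m+a+2 : ℕ) : KF)) * X ^ (m+a+1)) := by
    rw [show (((m+a+2 : ℕ)) : KF) = ((m : ℕ) : KF) + (((a+2 : ℕ)) : KF) by push_cast; ring, C_add]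
    ring
  linear_combination hTop + hTail - hHead

/-- For `1 ≤ i`, `i + 2 ≤ j ≤ g`:
`r(2(g−j+1) x^{j−i−2} f(x) + x^{2g−i−j+1} ∂_x q(f(x), x^{2g−2j+2}), f'(x))
 = Σ_{k=0}^{2g−2j+2} (2g−2j+2−k) λ_{2(2g+1−k)} x^{k+j−i−2}`,
and in particular this remainder has degree ≤ 2g−3 in `x`. -/
theorem remainder_coefficient_zij (g i j : ℕ) (hi : 1 ≤ i) (hij : i + 2 ≤ j) (hj : j ≤ g) :
    (C ((2*(g-j+1) : ℕ) : KF) * X ^ (j-i-2) * fHyp g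
        + X ^ (2*g+1-i-j) * derivative (fHyp g /ₘ X ^ (2*g-2*j+2)))
      % derivative (fHyp g)
      = ∑ k ∈ Finset.range (2*g-2*j+3),
          C (((2*g-2*j+2-k : ℕ) : KF) * lamK g (2*g+1-k)) * X ^ (k+j-i-2) ∧
    ((C ((2*(g-j+1) : ℕ) : KF) * X ^ (j-i-2) * fHyp g
        + X ^ (2*g+1-i-j) * derivative (fHyp g /ₘ X ^ (2*g-2*j+2)))
      % derivative (fHyp g)).degree ≤ ((2*g-3 : ℕ) : WithBot ℕ) := by
  set m := 2*g-2*j+2 with hm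
  set s := j-i-2 with hs
  set a := 2*j-3 with ha
  set A : ℕ → KF := fun k => lamK g (2*g+1-k) with hA
  rw [show 2*(g-j+1) = m by omega, show 2*g+1-i-j = s+(m+1) by omega,
    show 2*g-2*j+3 = m+1 by omega]
  have hF : fHyp g = X ^ (m+a+2) + ∑ k ∈ range (m+(a+1)), C (A k) * X ^ k := by
    rw [fHyp]
    congr 1
    · rw [show 2*g+1 = m+a+2 by omega]
    · refine Finset.sum_congr ?_ fun k _ => rfl
      rw [show 2*g = m+(a+1) by omega]
  have hQ : fHyp g /ₘ X ^ m = X ^ (a+2) + ∑ k ∈ range (a+1), C (A (m+k)) * X ^ k := by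
    rw [hF]; exact quot_aux m a A
  have hR : (∑ k ∈ Finset.range (m+1), C (((m-k : ℕ) : KF) * lamK g (2*g+1-k)) * X ^ (k+j-i-2))
      = ∑ k ∈ Finset.range (m+1), C (((m-k : ℕ) : KF) * lamK g (2*g+1-k)) * X ^ (s+k) :=
    Finset.sum_congr rfl fun k _ => by rw [show k+j-i-2 = s+k by omega]
  rw [hR]
  have hkey : C ((m : ℕ) : KF) * X ^ s * fHyp g
      + X ^ (s+(m+1)) * derivative (fHyp g /ₘ X ^ m)
      = (∑ k ∈ Finset.range (m+1), C (((m-k : ℕ) : KF) * A k) * X ^ (s+k))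
        + X ^ (s+1) * derivative (fHyp g) := by
    rw [hQ, hF]
    calc C ((m : ℕ) : KF) * X ^ s * (X ^ (m+a+2) + ∑ k ∈ range (m+(a+1)), C (A k) * X ^ k)
          + X ^ (s+(m+1)) * derivative (X ^ (a+2) + ∑ k ∈ range (a+1), C (A (m+k)) * X ^ k)
        = X ^ s * (C ((m : ℕ) : KF) * (X ^ (m+a+2) + ∑ k ∈ range (m+(a+1)), C (A k) * X ^ k)
            + X ^ (m+1) * derivative (X ^ (a+2) + ∑ k ∈ range (a+1), C (A (m+k)) * X ^ k)) := by
          rw [pow_add]; ring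
      _ = X ^ s * ((∑ k ∈ range (m+1), C (((m-k : ℕ) : KF) * A k) * X ^ k)
            + X * derivative (X ^ (m+a+2) + ∑ k ∈ range (m+(a+1)), C (A k) * X ^ k)) := by
          rw [core m a A]
      _ = (∑ k ∈ Finset.range (m+1), C (((m-k : ℕ) : KF) * A k) * X ^ (s+k))
            + X ^ (s+1) * derivative (X ^ (m+a+2) + ∑ k ∈ range (m+(a+1)), C (A k) * X ^ k) := by
          rw [mul_add, sum_shift_mul, pow_succ]
          ring
  have hdF : degree (derivative (fHyp g)) = ((m+a+1 : ℕ) : WithBot ℕ) := by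
    rw [hF]; exact deg_deriv m a A
  have hd0 : derivative (fHyp g) ≠ 0 := by
    refine Polynomial.ne_zero_of_degree_gt (n := ⊥) ?_
    rw [hdF]
    exact_mod_cast WithBot.bot_lt_coe (m+a+1)
  have hdegR : degree (∑ k ∈ Finset.range (m+1), C (((m-k : ℕ) : KF) * A k) * X ^ (s+k))
      ≤ ((s+m : ℕ) : WithBot ℕ) := by
    refine le_trans (degree_sum_le _ _) (Finset.sup_le fun k hk => ?_)
    refine le_trans (degree_C_mul_X_pow_le _ _) ?_
    exact_mod_cast Nat.add_le_add_left (Nat.lt_succ_iff.mp (mem_range.mp hk)) s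
  have hmod : (C ((m : ℕ) : KF) * X ^ s * fHyp g
      + X ^ (s+(m+1)) * derivative (fHyp g /ₘ X ^ m)) % derivative (fHyp g)
      = ∑ k ∈ Finset.range (m+1), C (((m-k : ℕ) : KF) * A k) * X ^ (s+k) := by
    refine mod_eq_of (q := X ^ (s+1)) hd0 hkey ?_
    · refine lt_of_le_of_lt hdegR ?_
      rw [hdF]
      exact_mod_cast (by omega : s+m < m+a+1)
  simp only [hA] at hmod hdegR
  refine ⟨hmod, ?_⟩
  rw [hmod]
  refine le_trans hdegR ?_
  exact_mod_cast (by omega : s+m ≤ 2*g-3)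

end
end

section
/- Let g ≥ 1, f(x) = x^{2g+1} + Σ_{k=0}^{2g−1} λ_{2(2g+1−k)} x^k, and for 1 ≤ i ≤ g let R_i(x) = x^{g−i+1} ∂_x q(f(x), x^{2g−2i+2}). Then for j = i+1 ≤ g: r(x^{g−i} R_{i+1}(x), f'(x)) = −((2i+1)/(2g+1)) Σ_{k=1}^{2g−1} k λ_{2(2g+1−k)} x^{k−1} + Σ_{k=2g−2i+1}^{2g−1} (k−2g+2i) λ_{2(2g+1−k)} x^{k−1}. -/
open Polynomial Finset

noncomputable section

/-- `R_i(x) = x^{g−i+1} ∂_x q(f(x), x^{2g−2i+2})`. -/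
def RK (g i : ℕ) : Polynomial KF :=
  X ^ (g-i+1) * derivative (fHyp g /ₘ X ^ (2*g-2*i+2))

/-- Auxiliary: division by `X^m`. -/
lemma divByMonic_X_pow_eq (Q R : Polynomial KF) (m : ℕ) (h : R.degree < (m : ℕ)) :
    (X ^ m * Q + R) /ₘ X ^ m = Q :=
  (Polynomial.div_modByMonic_unique Q R (monic_X_pow m)
    ⟨by ring, by simpa [degree_X_pow] using h⟩).1

/-- Auxiliary: euclidean remainder by a polynomial with explicit leading term. -/
lemma mod_leading (n : ℕ) (a c : KF) (hc : c ≠ 0) (S T : Polynomial KF)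
    (hS : S.degree < (n : ℕ)) (hT : T.degree < (n : ℕ)) :
    (C a * X ^ n + S) % (C c * X ^ n + T) = S - C (a / c) * T := by
  set F : Polynomial KF := C c * X ^ n + T with hF
  have hdegCX : (C c * X ^ n : Polynomial KF).degree = (n : ℕ) := by
    rw [degree_C_mul_X_pow n hc]
  have hdegF : F.degree = (n : ℕ) := by
    rw [hF, add_comm, degree_add_eq_right_of_degree_lt (by rw [hdegCX]; exact hT), hdegCX]
  have hF0 : F ≠ 0 := fun h0 => by simp [h0] at hdegF
  have hlc : F.leadingCoeff = c := by
    have hnd : F.natDegree = n := natDegree_eq_of_degree_eq_some hdegF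
    rw [leadingCoeff, hnd, hF]
    rw [coeff_add, coeff_C_mul, coeff_X_pow, if_pos rfl,
      coeff_eq_zero_of_degree_lt (by exact_mod_cast hT)]
    ring
  have hmonic : (F * C F.leadingCoeff⁻¹).Monic := monic_mul_leadingCoeff_inv hF0
  have hdegM : (F * C F.leadingCoeff⁻¹).degree = (n : ℕ) := by
    rw [hlc, degree_mul, hdegF, degree_C (inv_ne_zero hc), add_zero]
  have key : (C a * X ^ n + S) %ₘ (F * C F.leadingCoeff⁻¹) = S - C (a / c) * T := by
    refine (Polynomial.div_modByMonic_unique (C c * C (a / c)) _ hmonic ⟨?_, ?_⟩).2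
    · have h1 : (C c⁻¹ : Polynomial KF) * C c = 1 := by
        rw [← C_mul, inv_mul_cancel₀ hc, C_1]
      have h2 : (C c : Polynomial KF) * C (a / c) = C a := by
        rw [← C_mul, mul_div_cancel₀ a hc]
      rw [hlc, hF]
      calc S - C (a / c) * T + (C c * X ^ n + T) * C c⁻¹ * (C c * C (a / c))
          = S - C (a / c) * T + (C c * X ^ n + T) * C (a / c) * (C c⁻¹ * C c) := by ring
        _ = S - C (a / c) * T + (C c * X ^ n + T) * C (a / c) := by rw [h1, mul_one]
        _ = (C c * C (a / c)) * X ^ n + S := by ring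
        _ = C a * X ^ n + S := by rw [h2]
    · rw [hdegM]
      calc (S - C (a / c) * T).degree ≤ max S.degree (C (a / c) * T).degree :=
            degree_sub_le _ _
        _ < (n : ℕ) := by
            refine max_lt hS ?_
            calc (C (a / c) * T).degree ≤ (C (a / c)).degree + T.degree :=
              degree_mul_le _ _
            _ ≤ 0 + T.degree := add_le_add degree_C_le le_rfl
            _ = T.degree := zero_add _
            _ < (n : ℕ) := hT
  rw [Polynomial.mod_def, key]


lemma degree_sum_C_mul_X_pow_lt (s : Finset ℕ) (c : ℕ → KF) (e : ℕ → ℕ) (n : ℕ)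
    (h : ∀ k ∈ s, e k < n) :
    (∑ k ∈ s, C (c k) * X ^ (e k)).degree < (n : WithBot ℕ) := by
  calc (∑ k ∈ s, C (c k) * X ^ (e k)).degree
      ≤ s.sup fun k => (C (c k) * X ^ (e k)).degree := degree_sum_le _ _
    _ < (n : WithBot ℕ) := by
        refine (Finset.sup_lt_iff (WithBot.bot_lt_coe n)).mpr ?_
        intro k hk
        calc (C (c k) * X ^ (e k)).degree
            ≤ (C (c k)).degree + (X ^ (e k) : Polynomial KF).degree := degree_mul_le _ _
          _ ≤ 0 + ((e k : ℕ) : WithBot ℕ) := add_le_add degree_C_le (degree_X_pow _).le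
          _ = ((e k : ℕ) : WithBot ℕ) := zero_add _
          _ < (n : WithBot ℕ) := by exact_mod_cast h k hk

/-- For `1 ≤ i` and `i + 1 ≤ g`:
`r(x^{g−i} R_{i+1}(x), f'(x)) = −((2i+1)/(2g+1)) Σ_{k=1}^{2g−1} k λ_{2(2g+1−k)} x^{k−1}
 + Σ_{k=2g−2i+1}^{2g−1} (k−2g+2i) λ_{2(2g+1−k)} x^{k−1}`. -/
theorem remainder_R_succ (g i : ℕ) (hi : 1 ≤ i) (hig : i + 1 ≤ g) :
    (X ^ (g-i) * RK g (i+1)) % derivative (fHyp g)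
      = C (-((2*(i : KF) + 1) / (2*(g : KF) + 1))) *
          (∑ k ∈ Finset.Icc 1 (2*g-1), C ((k : KF) * lamK g (2*g+1-k)) * X ^ (k-1))
        + ∑ k ∈ Finset.Icc (2*g-2*i+1) (2*g-1),
            C (((k+2*i-2*g : ℕ) : KF) * lamK g (2*g+1-k)) * X ^ (k-1) := by
  set m : ℕ := 2*g - 2*i with hm
  have hm2g : m ≤ 2*g := Nat.sub_le _ _
  -- Step 1: the quotient
  set Q : Polynomial KF :=
    X ^ (2*i+1) + ∑ j ∈ range (2*i), C (lamK g (2*i+1-j)) * X ^ j with hQ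
  have hquot : fHyp g /ₘ X ^ m = Q := by
    have hdecomp : fHyp g = X ^ m * Q +
        ∑ k ∈ range m, C (lamK g (2*g+1-k)) * X ^ k := by
      rw [fHyp, hQ]
      have hsplit : ∑ k ∈ range (2*g), C (lamK g (2*g+1-k)) * X ^ k
          = (∑ k ∈ range m, C (lamK g (2*g+1-k)) * X ^ k)
            + ∑ k ∈ Ico m (2*g), C (lamK g (2*g+1-k)) * X ^ k := by
        rw [range_eq_Ico, range_eq_Ico]
        exact (Finset.sum_Ico_consecutive (f := fun k => C (lamK g (2*g+1-k)) * (X : Polynomial KF) ^ k) (Nat.zero_le m) hm2g).symm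
      have hIco : ∑ k ∈ Ico m (2*g), C (lamK g (2*g+1-k)) * X ^ k
          = X ^ m * ∑ j ∈ range (2*i), C (lamK g (2*i+1-j)) * X ^ j := by
        rw [Finset.sum_Ico_eq_sum_range, Finset.mul_sum]
        have h2i : 2*g - m = 2*i := by omega
        rw [h2i]
        refine Finset.sum_congr rfl fun j hj => ?_
        rw [Finset.mem_range] at hj
        have e1 : 2*g+1-(m+j) = 2*i+1-j := by omega
        rw [e1, pow_add]
        ring
      have hX : (X : Polynomial KF) ^ (2*g+1) = X ^ m * X ^ (2*i+1) := by
        rw [← pow_add]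
        congr 1
        omega
      rw [hsplit, hIco, hX]
      ring
    rw [hdecomp]
    apply divByMonic_X_pow_eq
    calc (∑ k ∈ range m, C (lamK g (2*g+1-k)) * X ^ k).degree
        ≤ (range m).sup fun k => (C (lamK g (2*g+1-k)) * X ^ k).degree :=
          degree_sum_le _ _
      _ < (m : WithBot ℕ) := by
          refine (Finset.sup_lt_iff (WithBot.bot_lt_coe m)).mpr ?_
          intro k hk
          rw [Finset.mem_range] at hk
          calc (C (lamK g (2*g+1-k)) * X ^ k).degree
              ≤ (C (lamK g (2*g+1-k))).degree + (X ^ k : Polynomial KF).degree :=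
                degree_mul_le _ _
            _ ≤ 0 + (k : WithBot ℕ) := add_le_add degree_C_le (degree_X_pow k).le
            _ = (k : WithBot ℕ) := zero_add _
            _ < (m : WithBot ℕ) := by exact_mod_cast hk
  -- Step 2: the dividend
  have hlhs : X ^ (g-i) * RK g (i+1)
      = C ((2*i+1 : ℕ) : KF) * X ^ (2*g)
        + ∑ k ∈ Finset.Icc (m+1) (2*g-1),
            C (((k+2*i-2*g : ℕ) : KF) * lamK g (2*g+1-k)) * X ^ (k-1) := by
    have e1 : g-(i+1)+1 = g-i := by omega
    have e2 : 2*g-2*(i+1)+2 = m := by omega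
    rw [RK, e1, e2, hquot, hQ, derivative_add, derivative_X_pow, derivative_sum]
    have hder : ∀ j ∈ range (2*i),
        derivative (C (lamK g (2*i+1-j)) * X ^ j)
          = C (lamK g (2*i+1-j) * (j : KF)) * X ^ (j-1) := by
      intro j _
      rw [derivative_C_mul_X_pow]
    rw [Finset.sum_congr rfl hder]
    have h2i1 : (2*i+1 : ℕ) - 1 = 2*i := by omega
    rw [h2i1, mul_add, mul_add, Finset.mul_sum, Finset.mul_sum]
    congr 1
    · -- leading term
      have hgi : 2*g = (g-i) + ((g-i) + 2*i) := by omega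
      rw [hgi, pow_add, pow_add]
      ring
    · -- the sum
      have hsucc := Finset.sum_range_succ'
        (fun j => X ^ (g-i) * (X ^ (g-i) *
          (C (lamK g (2*i+1-j) * (j : KF)) * X ^ (j-1)))) (2*i-1)
      have h2i : 2*i-1+1 = 2*i := by omega
      rw [h2i] at hsucc
      rw [hsucc]
      simp only [Nat.cast_zero, mul_zero, C_0, zero_mul, add_zero]
      have hIcc : Finset.Icc (m+1) (2*g-1) = Finset.Ico (m+1) (2*g) := by
        rw [← Finset.Ico_add_one_right_eq_Icc]
        congr 1
        omega
      rw [hIcc, Finset.sum_Ico_eq_sum_range]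
      have hrange : 2*g - (m+1) = 2*i-1 := by omega
      rw [hrange]
      refine Finset.sum_congr rfl fun j hj => ?_
      rw [Finset.mem_range] at hj
      have i1 : 2*g+1-(m+1+j) = 2*i+1-(j+1) := by omega
      have i2 : m+1+j+2*i-2*g = j+1 := by omega
      have i3 : m+1+j-1 = (g-i)+((g-i)+(j+1-1)) := by omega
      rw [i1, i2, i3, C_mul, C_mul, pow_add, pow_add]
      ring
  -- Step 3: the derivative of f
  have hf' : derivative (fHyp g)
      = C ((2*g+1 : ℕ) : KF) * X ^ (2*g)
        + ∑ k ∈ Finset.Icc 1 (2*g-1), C ((k : KF) * lamK g (2*g+1-k)) * X ^ (k-1) := by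
    rw [fHyp, derivative_add, derivative_X_pow, derivative_sum]
    have hder : ∀ k ∈ range (2*g),
        derivative (C (lamK g (2*g+1-k)) * X ^ k)
          = C (lamK g (2*g+1-k) * (k : KF)) * X ^ (k-1) := by
      intro k _
      rw [derivative_C_mul_X_pow]
    rw [Finset.sum_congr rfl hder]
    have h01 : (2*g+1 : ℕ) - 1 = 2*g := by omega
    rw [h01]
    congr 1
    have hsucc := Finset.sum_range_succ'
      (fun k => C (lamK g (2*g+1-k) * (k : KF)) * X ^ (k-1)) (2*g-1)
    have h2g : 2*g-1+1 = 2*g := by omega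
    rw [h2g] at hsucc
    rw [hsucc]
    simp only [Nat.cast_zero, mul_zero, C_0, zero_mul, add_zero]
    have hIcc : Finset.Icc 1 (2*g-1) = Finset.Ico 1 (2*g) := by
      rw [← Finset.Ico_add_one_right_eq_Icc, h2g]
    rw [hIcc, Finset.sum_Ico_eq_sum_range]
    refine Finset.sum_congr rfl fun j hj => ?_
    rw [Finset.mem_range] at hj
    have e : (1:ℕ)+j = j+1 := by omega
    rw [e, C_mul, C_mul]
    ring
  -- Step 4: the remainder
  have hc : ((2*g+1 : ℕ) : KF) ≠ 0 := Nat.cast_ne_zero.mpr (by omega)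
  have hS : (∑ k ∈ Finset.Icc (m+1) (2*g-1),
      C (((k+2*i-2*g : ℕ) : KF) * lamK g (2*g+1-k)) * X ^ (k-1)).degree
        < ((2*g : ℕ) : WithBot ℕ) := by
    apply degree_sum_C_mul_X_pow_lt
    intro k hk
    rw [Finset.mem_Icc] at hk
    omega
  have hT : (∑ k ∈ Finset.Icc 1 (2*g-1),
      C ((k : KF) * lamK g (2*g+1-k)) * X ^ (k-1)).degree < ((2*g : ℕ) : WithBot ℕ) := by
    apply degree_sum_C_mul_X_pow_lt
    intro k hk
    rw [Finset.mem_Icc] at hk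
    omega
  rw [hlhs, hf', mod_leading (2*g) _ _ hc _ _ hS hT]
  have hcast : (((2*i+1 : ℕ) : KF) / ((2*g+1 : ℕ) : KF))
      = (2*(i : KF) + 1) / (2*(g : KF) + 1) := by push_cast; ring
  rw [hcast, map_neg]
  ring

end
end
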